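/- Let f ∈ (0,1) and κ, γ₁, γ₂, γ₃ > 0, let u* ∈ [0,1]⁴ be a steady state of the ZIP regulatory system, and set a = κ·u₃*², b = 2κ·u₃*·(1−u₁*), c = f, d = γ₁·u₄*, e = γ₁·u₃*, f̂ = γ₂·(1−u₄*), g = γ₃·u₄*, h = γ₃·u₃* + γ₂·u₂*. Then the characteristic polynomial of the Jacobian J(u*) satisfies, for all λ ∈ ℝ with λ̃ := λ + 1: det(λ·I − J(u*)) = (λ̃ + a)·λ̃·(λ̃² + (d+h)·λ̃ + (d·h − e·g)) + b·c·f̂·e, and moreover d·h − e·g = γ₁·γ₂·u₂*·u₄* ≥ 0. -/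

import Mathlib

/-- The ZIP regulatory vector field on ℝ⁴ (components indexed by `Fin 4`). -/
noncomputable def zipField (κ γ₁ γ₂ γ₃ f : ℝ) (u : Fin 4 → ℝ) : Fin 4 → ℝ :=
  ![κ * (u 2) ^ 2 * (1 - u 0) - u 0,
    u 0 * f - u 1,
    1 - γ₁ * u 2 * u 3 - u 2,
    γ₂ * u 1 - γ₃ * u 2 * u 3 - (1 + γ₂ * u 1) * u 3]

/-- The Jacobian matrix of the ZIP regulatory vector field at a point u. -/
noncomputable def zipJacobian (κ γ₁ γ₂ γ₃ f : ℝ) (u : Fin 4 → ℝ) :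
    Matrix (Fin 4) (Fin 4) ℝ :=
  !![-(κ * (u 2) ^ 2) - 1, 0, 2 * κ * u 2 * (1 - u 0), 0;
     f, -1, 0, 0;
     0, 0, -(γ₁ * u 3) - 1, -(γ₁ * u 2);
     0, γ₂ * (1 - u 3), -(γ₃ * u 3), -(γ₃ * u 2) - 1 - γ₂ * u 1]

set_option maxHeartbeats 1000000 in
private lemma det_fin_four' (A : Matrix (Fin 4) (Fin 4) ℝ) :
    A.det =
      A 0 0 * (A 1 1 * (A 2 2 * A 3 3 - A 2 3 * A 3 2) - A 1 2 * (A 2 1 * A 3 3 - A 2 3 * A 3 1)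
        + A 1 3 * (A 2 1 * A 3 2 - A 2 2 * A 3 1))
      - A 0 1 * (A 1 0 * (A 2 2 * A 3 3 - A 2 3 * A 3 2) - A 1 2 * (A 2 0 * A 3 3 - A 2 3 * A 3 0)
        + A 1 3 * (A 2 0 * A 3 2 - A 2 2 * A 3 0))
      + A 0 2 * (A 1 0 * (A 2 1 * A 3 3 - A 2 3 * A 3 1) - A 1 1 * (A 2 0 * A 3 3 - A 2 3 * A 3 0)
        + A 1 3 * (A 2 0 * A 3 1 - A 2 1 * A 3 0))
      - A 0 3 * (A 1 0 * (A 2 1 * A 3 2 - A 2 2 * A 3 1) - A 1 1 * (A 2 0 * A 3 2 - A 2 2 * A 3 0)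
        + A 1 2 * (A 2 0 * A 3 1 - A 2 1 * A 3 0)) := by
  simp [Matrix.det_succ_row_zero, Fin.sum_univ_succ, Fin.succAbove,
    show (2:Fin 3).succ = 3 from rfl, show ((2:Fin 3).castSucc : Fin 4) = 2 from rfl]
  ring

/-- the characteristic polynomial of the Jacobian at a steady
state, written in the shifted variable λ̃ = λ + 1, together with the identity
d·h − e·g = γ₁·γ₂·u₂*·u₄* ≥ 0. -/
theorem zip_charpoly_shifted_form
    (κ γ₁ γ₂ γ₃ f : ℝ) (hκ : 0 < κ) (hγ₁ : 0 < γ₁) (hγ₂ : 0 < γ₂) (hγ₃ : 0 < γ₃)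
    (hf : f ∈ Set.Ioo (0 : ℝ) 1)
    (u : Fin 4 → ℝ) (hu : ∀ i, u i ∈ Set.Icc (0 : ℝ) 1)
    (hsteady : zipField κ γ₁ γ₂ γ₃ f u = 0)
    (a b c d e f' g h : ℝ)
    (ha : a = κ * (u 2) ^ 2) (hb : b = 2 * κ * u 2 * (1 - u 0)) (hc : c = f)
    (hd : d = γ₁ * u 3) (he : e = γ₁ * u 2) (hf' : f' = γ₂ * (1 - u 3))
    (hg : g = γ₃ * u 3) (hh : h = γ₃ * u 2 + γ₂ * u 1) :
    (∀ lam : ℝ,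
      (lam • (1 : Matrix (Fin 4) (Fin 4) ℝ) - zipJacobian κ γ₁ γ₂ γ₃ f u).det =
        ((lam + 1) + a) * (lam + 1) *
          ((lam + 1) ^ 2 + (d + h) * (lam + 1) + (d * h - e * g)) + b * c * f' * e) ∧
    d * h - e * g = γ₁ * γ₂ * u 1 * u 3 ∧ 0 ≤ d * h - e * g := by
  have h1 := (hu 1).1; have h3 := (hu 3).1
  have key : d * h - e * g = γ₁ * γ₂ * u 1 * u 3 := by subst hd hh he hg; ring
  refine ⟨fun lam => ?_, key, by rw [key]; positivity⟩
  subst ha hb hc hd he hf' hg hh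
  rw [det_fin_four']
  simp [zipJacobian, Matrix.smul_apply, Matrix.one_apply, Matrix.vecHead, Matrix.vecTail]
  ring
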